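/- Fix i with 1 ≤ i ≤ k and t ∈ Kˣ. For a point x define t·x : S → K by (t·x)(u) := t^{⟨p_i, u⟩} · x(u) (the action of the one-parameter subgroup R_{p_i} of the torus). Then: (a) t·x is a point; (b) (t·x) * (t·y) = t·(x*y) for all points x, y; (c) consequently, if x is an idempotent (x*x = x) then so is t·x. (This is Lemma 8.3: the set of idempotents of a root monoid is invariant under every one-parameter subgroup R_i with p_i ∈ τ, hence under R_τ.) -/

import Mathlib

open Finset

def pairZ {n : ℕ} (v u : Fin n → ℤ) : ℤ := ∑ i, v i * u i

def InS {n m : ℕ} (q : Fin m → Fin n → ℤ) (u : Fin n → ℤ) : Prop :=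
  ∀ j, 0 ≤ pairZ (q j) u

def IsPoint {n m : ℕ} {K : Type*} [Field K] (q : Fin m → Fin n → ℤ)
    (x : (Fin n → ℤ) → K) : Prop :=
  x 0 = 1 ∧ ∀ u v : Fin n → ℤ, InS q u → InS q v → x (u + v) = x u * x v

def Compatible {n m k : ℕ} (hkm : k ≤ m) (q : Fin m → Fin n → ℤ)
    (e : Fin k → Fin n → ℤ) : Prop :=
  (∀ r s : Fin k, pairZ (q (Fin.castLE hkm s)) (e r) = if r = s then -1 else 0) ∧
  (∀ (r : Fin k) (j : Fin m), k ≤ (j : ℕ) → 0 ≤ pairZ (q j) (e r))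

noncomputable def rmul {n m k : ℕ} {K : Type*} [Field K] (hkm : k ≤ m)
    (q : Fin m → Fin n → ℤ) (e1 e2 : Fin k → Fin n → ℤ)
    (x y : (Fin n → ℤ) → K) : (Fin n → ℤ) → K :=
  fun u =>
    ∑ i ∈ Fintype.piFinset (fun r : Fin k =>
        Finset.range ((pairZ (q (Fin.castLE hkm r)) u).toNat + 1)),
      (∏ r : Fin k, ((pairZ (q (Fin.castLE hkm r)) u).toNat.choose (i r) : K)) *
        x (u + ∑ r : Fin k, (i r : ℤ) • e2 r) *
        y (u + ∑ r : Fin k, (pairZ (q (Fin.castLE hkm r)) u - (i r : ℤ)) • e1 r)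

noncomputable def xtau {n m k : ℕ} (K : Type*) [Field K] (hkm : k ≤ m)
    (q : Fin m → Fin n → ℤ) : (Fin n → ℤ) → K :=
  fun u => if ∀ r : Fin k, pairZ (q (Fin.castLE hkm r)) u = 0 then 1 else 0

lemma pairZ_add {n : ℕ} (v u w : Fin n → ℤ) :
    pairZ v (u + w) = pairZ v u + pairZ v w := by
  simp [pairZ, mul_add, Finset.sum_add_distrib]

lemma pairZ_smul {n : ℕ} (v : Fin n → ℤ) (c : ℤ) (e : Fin n → ℤ) :
    pairZ v (c • e) = c * pairZ v e := by
  simp only [pairZ, Pi.smul_apply, smul_eq_mul, Finset.mul_sum]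
  exact Finset.sum_congr rfl fun _ _ => by ring

lemma pairZ_sum {n k : ℕ} (v : Fin n → ℤ) (f : Fin k → Fin n → ℤ) :
    pairZ v (∑ r, f r) = ∑ r, pairZ v (f r) := by
  simp only [pairZ, Finset.sum_apply, Finset.mul_sum]
  rw [Finset.sum_comm]

theorem statement_15 {n m k : ℕ} {K : Type*} [Field K] [CharZero K]
    (hn : 1 ≤ n) (hk : 1 ≤ k) (hkm : k ≤ m)
    (q : Fin m → Fin n → ℤ) (e1 e2 : Fin k → Fin n → ℤ)
    (he1 : Compatible hkm q e1) (he2 : Compatible hkm q e2)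
    (i : Fin k) (t : Kˣ)
    (act : ((Fin n → ℤ) → K) → ((Fin n → ℤ) → K))
    (hact : ∀ (x : (Fin n → ℤ) → K) (u : Fin n → ℤ),
      act x u = (t : K) ^ (pairZ (q (Fin.castLE hkm i)) u) * x u) :
    (∀ x : (Fin n → ℤ) → K, IsPoint q x → IsPoint q (act x)) ∧
    (∀ x y : (Fin n → ℤ) → K, IsPoint q x → IsPoint q y →
      ∀ u : Fin n → ℤ, InS q u →
        rmul hkm q e1 e2 (act x) (act y) u = act (rmul hkm q e1 e2 x y) u) ∧
    (∀ x : (Fin n → ℤ) → K, IsPoint q x →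
      (∀ u : Fin n → ℤ, InS q u → rmul hkm q e1 e2 x x u = x u) →
      ∀ u : Fin n → ℤ, InS q u →
        rmul hkm q e1 e2 (act x) (act x) u = act x u) := by
  have ht : (t : K) ≠ 0 := t.ne_zero
  set p : Fin n → ℤ := q (Fin.castLE hkm i) with hp
  have hb : ∀ x y : (Fin n → ℤ) → K, ∀ u : Fin n → ℤ,
      rmul hkm q e1 e2 (act x) (act y) u = act (rmul hkm q e1 e2 x y) u := by
    intro x y u
    rw [hact, rmul, rmul, Finset.mul_sum]
    apply Finset.sum_congr rfl
    intro f hf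
    rw [hact, hact]
    have h1 : pairZ p (u + ∑ r : Fin k, (f r : ℤ) • e2 r)
        = pairZ p u - (f i : ℤ) := by
      rw [pairZ_add, pairZ_sum]
      simp only [hp, pairZ_smul, fun r => he2.1 r i]
      simp [mul_ite]
      ring
    have h2 : pairZ p (u + ∑ r : Fin k,
        (pairZ (q (Fin.castLE hkm r)) u - (f r : ℤ)) • e1 r) = (f i : ℤ) := by
      rw [pairZ_add, pairZ_sum]
      simp only [hp, pairZ_smul, fun r => he1.1 r i]
      simp [mul_ite, ← hp]
    rw [h1, h2]
    have h3 : (t : K) ^ (pairZ p u - (f i : ℤ)) * (t : K) ^ ((f i : ℤ))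
        = (t : K) ^ (pairZ p u) := by
      rw [← zpow_add₀ ht]; congr 1; ring
    calc (∏ r : Fin k, ((pairZ (q (Fin.castLE hkm r)) u).toNat.choose (f r) : K)) *
          ((t : K) ^ (pairZ p u - (f i : ℤ)) * x (u + ∑ r : Fin k, (f r : ℤ) • e2 r)) *
          ((t : K) ^ ((f i : ℤ)) * y (u + ∑ r : Fin k,
            (pairZ (q (Fin.castLE hkm r)) u - (f r : ℤ)) • e1 r))
        = ((t : K) ^ (pairZ p u - (f i : ℤ)) * (t : K) ^ ((f i : ℤ))) *
          ((∏ r : Fin k, ((pairZ (q (Fin.castLE hkm r)) u).toNat.choose (f r) : K)) *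
            x (u + ∑ r : Fin k, (f r : ℤ) • e2 r) *
            y (u + ∑ r : Fin k,
              (pairZ (q (Fin.castLE hkm r)) u - (f r : ℤ)) • e1 r)) := by ring
      _ = _ := by rw [h3]
  refine ⟨?_, fun x y _ _ u _ => hb x y u, ?_⟩
  · intro x hx
    constructor
    · rw [hact]
      have : pairZ p (0 : Fin n → ℤ) = 0 := by simp [pairZ]
      rw [this, hx.1]; simp
    · intro u v hu hv
      rw [hact, hact, hact, pairZ_add, hx.2 u v hu hv, zpow_add₀ ht]; ring
  · intro x hx hid u hu
    rw [hb x x u, hact, hact, hid u hu]
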